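/- arXiv:math/0406610 — 2 statements merged into one kernel-verified Lean document; each statement's English description precedes it below -/
import Mathlib

section
/- The square of the Bernoulli generating function satisfies b(x)^2 = (1 - x)·b(x) - x·b'(x), where b(x) = x/(e^x - 1) is regarded as a formal power series (equivalently, as an identity of functions wherever defined), and b' denotes the derivative. -/
open PowerSeries

lemma exp_derivativeFun : (exp ℚ).derivativeFun = exp ℚ := by
  ext n
  rw [show (exp ℚ).derivativeFun = d⁄dX ℚ (exp ℚ) from rfl, coeff_derivativeFun, coeff_exp, coeff_exp]
  simp only [Algebra.algebraMap_self, RingHom.id_apply]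
  have h1 : ((n+1).factorial : ℚ) = (n.factorial : ℚ) * (n+1) := by
    rw [Nat.factorial_succ]; push_cast; ring
  field_simp [h1]
  rw [h1]; ring

/-- The Bernoulli generating function `b(x) = x/(e^x - 1)` (as a formal power series,
i.e. `∑ B_n xⁿ/n!`) satisfies `b(x)² = (1 - x)·b(x) - x·b'(x)`. -/
theorem bernoulliPowerSeries_sq :
    (bernoulliPowerSeries ℚ) ^ 2
      = (1 - X) * bernoulliPowerSeries ℚ - X * (bernoulliPowerSeries ℚ).derivativeFun := by
  set B := bernoulliPowerSeries ℚ
  set E : ℚ⟦X⟧ := exp ℚ - 1 with hEdef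
  have hE : E ≠ 0 := by
    intro h
    have := congrArg (coeff 1) h
    simp [hEdef, coeff_exp] at this
  have hB : B * E = X := bernoulliPowerSeries_mul_exp_sub_one ℚ
  have hd : B.derivativeFun * E + B * exp ℚ = 1 := by
    have := congrArg derivativeFun hB
    rw [derivativeFun_mul] at this
    have hEd : E.derivativeFun = exp ℚ := by
      rw [hEdef, show exp ℚ - 1 = exp ℚ + (-1 : ℚ⟦X⟧) by ring, derivativeFun_add,
        show (-1 : ℚ⟦X⟧) = C (-1 : ℚ) by simp, show (C (-1 : ℚ)).derivativeFun = 0 from derivative_C, add_zero, exp_derivativeFun]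
    rw [hEd] at this
    have hXd : (X : ℚ⟦X⟧).derivativeFun = 1 := derivative_X
    rw [hXd] at this
    rw [← this]
    simp only [smul_eq_mul]
    ring
  apply mul_right_cancel₀ hE
  have hexp : exp ℚ = E + 1 := by rw [hEdef]; ring
  rw [hexp] at hd
  linear_combination (B - 1) * hB + X * hd
end

section
/- For every integer n ≥ 2: ∑_{k=1}^{n} B_{2k}·B_{2n-2k} = (1/(n+1))·∑_{k=1}^{n} C(2n+2, 2k+2)·B_{2k}·B_{2n-2k} + 2n·B_{2n}, where C(2n+2,2k+2) is the binomial coefficient. (This is the p = 1 case of the one-parameter generalization of Miki's identity.) -/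
open Finset Nat PowerSeries

noncomputable section

lemma beta_sum (m : ℕ) : ∀ s : ℕ,
    ∑ u ∈ range (m+1), (m.choose u : ℚ) * (s+u)! * (m+1-u)!
      = ((s+m+2)! : ℚ) / ((s+1)*(s+2)) := by
  induction m with
  | zero =>
    intro s
    simp only [zero_add, Finset.sum_range_one, range_one, sum_singleton, choose_self, cast_one, one_mul, add_zero]
    rw [show s+0+2 = (s+1)+1 from by ring, factorial_succ (s+1), factorial_succ s]
    push_cast
    field_simp
    ring
  | succ m ih =>
    intro s
    have key : ∑ u ∈ range (m+2), ((m+1).choose u : ℚ) * (s+u)! * (m+1+1-u)!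
        = ((s:ℚ)+m+3) * ∑ u ∈ range (m+1), (m.choose u : ℚ) * (s+u)! * (m+1-u)! := by
      rw [Finset.sum_range_succ' _ (m+1)]
      have hsplit : ∀ i ∈ range (m+1),
          ((m+1).choose (i+1) : ℚ) * (s+(i+1))! * (m+1+1-(i+1))!
          = (m.choose i : ℚ) * ((s+1)+i)! * (m+1-i)!
            + (m.choose (i+1) : ℚ) * (s+(i+1))! * (m+1-i)! := by
        intro i hi
        rw [Nat.choose_succ_succ]
        have e1 : m+1+1-(i+1) = m+1-i := by omega
        have e2 : s+(i+1) = (s+1)+i := by omega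
        rw [e1, e2]
        push_cast
        ring
      rw [Finset.sum_congr rfl hsplit, Finset.sum_add_distrib]
      have hA : (∑ i ∈ range (m+1), (m.choose (i+1) : ℚ) * (s+(i+1))! * (m+1-i)!)
            + ((m+1).choose 0 : ℚ) * (s+0)! * (m+1+1-0)!
          = ∑ v ∈ range (m+2), (m.choose v : ℚ) * (s+v)! * (m+2-v)! := by
        rw [Finset.sum_range_succ' (fun v => (m.choose v : ℚ) * (s+v)! * (m+2-v)!) (m+1)]
        congr 1
        · apply Finset.sum_congr rfl
          intro i hi
          have e : m+2-(i+1) = m+1-i := by omega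
          rw [e]
        · simp
      rw [add_assoc, hA]
      have hAval : ∑ v ∈ range (m+2), (m.choose v : ℚ) * (s+v)! * (m+2-v)!
          = ((s:ℚ)+m+3) * (∑ u ∈ range (m+1), (m.choose u : ℚ) * (s+u)! * (m+1-u)!)
            - ∑ i ∈ range (m+1), (m.choose i : ℚ) * ((s+1)+i)! * (m+1-i)! := by
        rw [Finset.sum_range_succ]
        simp only [Nat.choose_succ_self, cast_zero, zero_mul, add_zero]
        rw [Finset.mul_sum, ← Finset.sum_sub_distrib]
        apply Finset.sum_congr rfl
        intro v hv
        simp only [mem_range] at hv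
        have h1 : (m+2-v)! = ((m+1-v)+1) * (m+1-v)! := by
          have e : m+2-v = (m+1-v)+1 := by omega
          rw [e, factorial_succ]
        have h3 : ((s+1)+v)! = ((s+v)+1) * (s+v)! := by
          have e : (s+1)+v = (s+v)+1 := by omega
          rw [e, factorial_succ]
        rw [h1, h3]
        have h4 : ((m+1-v : ℕ) : ℚ) = (m:ℚ)+1-v := by
          push_cast [Nat.cast_sub (show v ≤ m+1 by omega)]
          ring
        push_cast [h4]
        ring
      rw [hAval]
      ring
    rw [key, ih s, show s+(m+1)+2 = (s+m+2)+1 from by ring, factorial_succ (s+m+2)]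
    push_cast
    ring

abbrev QX := PowerSeries ℚ
abbrev QXY := PowerSeries QX

def β (i j : ℕ) : ℚ := bernoulli (i+j) / (i ! * j !)

def Bxy : QXY := PowerSeries.mk fun j => PowerSeries.mk fun i => β i j
def EX : QXY := PowerSeries.C (R := QX) (exp ℚ)
def EY : QXY := exp QX
def XX : QXY := PowerSeries.C (R := QX) PowerSeries.X
def BX : QXY := PowerSeries.C (R := QX) (bernoulliPowerSeries ℚ)
def BY : QXY := bernoulliPowerSeries QX

lemma coeff_coeff_EXY (i j : ℕ) :
    (coeff (R := ℚ) i) ((coeff (R := QX) j) (EX * EY)) = 1/(i ! * j !) := by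
  rw [EX, EY, coeff_C_mul, coeff_exp]
  have h : (algebraMap ℚ QX) (1 / j !) = C (R := ℚ) (1/(j ! : ℚ)) := rfl
  rw [h, coeff_mul_C, coeff_exp]
  simp [Algebra.algebraMap_self_apply]
  ring

lemma coeff_Bxy_mul (G : QXY) (a b : ℕ) :
    (coeff (R := ℚ) a) ((coeff (R := QX) b) (Bxy * G)) =
      ∑ j ∈ range (b+1), ∑ i ∈ range (a+1),
        β i j * (coeff (R := ℚ) (a-i)) ((coeff (R := QX) (b-j)) G) := by
  rw [coeff_mul, map_sum, Finset.Nat.sum_antidiagonal_eq_sum_range_succ_mk]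
  apply Finset.sum_congr rfl
  intro j hj
  rw [Bxy, coeff_mk, coeff_mul, Finset.Nat.sum_antidiagonal_eq_sum_range_succ_mk]
  apply Finset.sum_congr rfl
  intro i hi
  rw [coeff_mk]

lemma fiber_choose (a b k : ℕ) :
    ∑ p ∈ (range (b+1) ×ˢ range (a+1)).filter (fun p => p.1 + p.2 = k),
      b.choose p.1 * a.choose p.2 = (b+a).choose k := by
  rw [Nat.add_choose_eq]
  apply Finset.sum_subset
  · intro p hp
    simp only [mem_filter] at hp
    exact Finset.HasAntidiagonal.mem_antidiagonal.2 hp.2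
  · intro p hp hnp
    rw [Finset.HasAntidiagonal.mem_antidiagonal] at hp
    simp only [mem_filter, mem_product, mem_range] at hnp
    have : b < p.1 ∨ a < p.2 := by omega
    rcases this with h | h
    · simp [Nat.choose_eq_zero_of_lt h]
    · simp [Nat.choose_eq_zero_of_lt h]

lemma regroup (a b : ℕ) :
    ∑ j ∈ range (b+1), ∑ i ∈ range (a+1), (b.choose j : ℚ) * (a.choose i) * bernoulli (j+i)
      = ∑ k ∈ range (a+b+1), ((a+b).choose k : ℚ) * bernoulli k := by
  rw [← Finset.sum_product']
  rw [← Finset.sum_fiberwise_of_maps_to (g := fun p => p.1 + p.2) (t := range (a+b+1))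
      (fun p hp => by simp only [mem_product, mem_range] at hp ⊢; omega)]
  apply Finset.sum_congr rfl
  intro k hk
  have h1 : ∀ p ∈ (range (b+1) ×ˢ range (a+1)).filter (fun p => p.1 + p.2 = k),
      (b.choose p.1 : ℚ) * (a.choose p.2) * bernoulli (p.1+p.2)
        = ((b.choose p.1 * a.choose p.2 : ℕ) : ℚ) * bernoulli k := by
    intro p hp
    simp only [mem_filter] at hp
    rw [hp.2]
    push_cast
    ring
  rw [Finset.sum_congr rfl h1, ← Finset.sum_mul, ← Nat.cast_sum, fiber_choose]
  rw [Nat.add_comm b a]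

lemma beta_term {a b i j : ℕ} (h1 : i ≤ a) (h2 : j ≤ b) :
    β i j * ((1:ℚ)/((a-i)! * (b-j)!))
      = (b.choose j : ℚ) * (a.choose i) * bernoulli (j+i) / (a ! * b !) := by
  have hA : (a ! : ℚ) = (a.choose i) * i ! * (a-i)! := by
    exact_mod_cast (Nat.choose_mul_factorial_mul_factorial h1).symm
  have hB : (b ! : ℚ) = (b.choose j) * j ! * (b-j)! := by
    exact_mod_cast (Nat.choose_mul_factorial_mul_factorial h2).symm
  rw [β, hA, hB, show j+i = i+j from Nat.add_comm j i]
  have n1 : (i ! : ℚ) ≠ 0 := by exact_mod_cast i.factorial_ne_zero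
  have n2 : (j ! : ℚ) ≠ 0 := by exact_mod_cast j.factorial_ne_zero
  have n3 : ((a-i)! : ℚ) ≠ 0 := by exact_mod_cast (a-i).factorial_ne_zero
  have n4 : ((b-j)! : ℚ) ≠ 0 := by exact_mod_cast (b-j).factorial_ne_zero
  have n5 : (a.choose i : ℚ) ≠ 0 := by exact_mod_cast (Nat.choose_pos h1).ne'
  have n6 : (b.choose j : ℚ) ≠ 0 := by exact_mod_cast (Nat.choose_pos h2).ne'
  field_simp

lemma K1 : Bxy * (EX * EY - 1) = XX + X := by
  apply PowerSeries.ext; intro b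
  apply PowerSeries.ext; intro a
  have hg : ∀ i j : ℕ, (coeff (R := ℚ) i) ((coeff (R := QX) j) (EX*EY - 1))
      = 1/(i ! * j !) - (if i = 0 ∧ j = 0 then 1 else 0) := by
    intro i j
    rw [map_sub, map_sub, coeff_coeff_EXY]
    congr 1
    by_cases hj : j = 0 <;> by_cases hi : i = 0 <;>
      simp [hj, hi, coeff_one]
  rw [coeff_Bxy_mul]
  have hterm : ∀ j ∈ range (b+1), ∀ i ∈ range (a+1),
      β i j * (coeff (R := ℚ) (a-i)) ((coeff (R := QX) (b-j)) (EX*EY - 1))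
      = (b.choose j : ℚ) * (a.choose i) * bernoulli (j+i) / (a ! * b !)
        - (if i = a ∧ j = b then β a b else 0) := by
    intro j hj i hi
    simp only [mem_range] at hj hi
    have hia : i ≤ a := by omega
    have hjb : j ≤ b := by omega
    rw [hg]
    have e1 : (if a-i = 0 ∧ b-j = 0 then (1:ℚ) else 0) = (if i = a ∧ j = b then 1 else 0) := by
      by_cases h : i = a ∧ j = b
      · rw [if_pos (by omega), if_pos h]
      · rw [if_neg (by omega), if_neg h]
    rw [e1, mul_sub]
    congr 1
    · rw [show (1:ℚ)/((a-i)! * (b-j)!) = 1/((a-i)! * (b-j)!) from rfl] at *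
      exact beta_term hia hjb
    · by_cases h : i = a ∧ j = b
      · rw [if_pos h, if_pos h, mul_one, h.1, h.2]
      · rw [if_neg h, if_neg h, mul_zero]
  calc ∑ j ∈ range (b+1), ∑ i ∈ range (a+1),
        β i j * (coeff (R := ℚ) (a-i)) ((coeff (R := QX) (b-j)) (EX*EY - 1))
      = ∑ j ∈ range (b+1), ∑ i ∈ range (a+1),
        ((b.choose j : ℚ) * (a.choose i) * bernoulli (j+i) / (a ! * b !)
          - (if i = a ∧ j = b then β a b else 0)) := by
        apply Finset.sum_congr rfl; intro j hj
        exact Finset.sum_congr rfl fun i hi => hterm j hj i hi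
    _ = (∑ j ∈ range (b+1), ∑ i ∈ range (a+1),
          (b.choose j : ℚ) * (a.choose i) * bernoulli (j+i)) / (a ! * b !)
          - ∑ j ∈ range (b+1), ∑ i ∈ range (a+1),
              (if i = a ∧ j = b then β a b else 0) := by
        rw [Finset.sum_div, ← Finset.sum_sub_distrib]
        apply Finset.sum_congr rfl; intro j hj
        rw [Finset.sum_sub_distrib, Finset.sum_div]
    _ = (∑ j ∈ range (b+1), ∑ i ∈ range (a+1),
          (b.choose j : ℚ) * (a.choose i) * bernoulli (j+i)) / (a ! * b !) - β a b := by
        congr 1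
        have h2 : ∀ j ∈ range (b+1), ∑ i ∈ range (a+1), (if i = a ∧ j = b then β a b else 0)
            = if j = b then β a b else 0 := by
          intro j hj
          by_cases hjb : j = b
          · simp only [hjb, and_true]
            rw [Finset.sum_ite_eq' (range (a+1)) a fun _ => β a b]
            simp
          · simp [hjb]
        rw [Finset.sum_congr rfl h2, Finset.sum_ite_eq' (range (b+1)) b fun _ => β a b]
        simp
    _ = (if a + b = 1 then (1:ℚ) else 0) / (a ! * b !) := by
        rw [regroup, Finset.sum_range_succ, Nat.choose_self, sum_bernoulli, β]
        push_cast
        ring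
    _ = (coeff (R := ℚ) a) ((coeff (R := QX) b) (XX + X)) := by
        rw [map_add, map_add, XX, coeff_C]
        by_cases hb : b = 0
        · subst hb
          rw [if_pos rfl, PowerSeries.coeff_X (R := QX), if_neg (by omega : ¬ (0:ℕ) = 1),
            map_zero, add_zero, PowerSeries.coeff_X]
          by_cases ha : a = 1
          · subst ha; norm_num [Nat.factorial]
          · rw [if_neg ha]; simp
        · rw [if_neg hb, map_zero, zero_add, PowerSeries.coeff_X (R := QX)]
          by_cases hb1 : b = 1
          · subst hb1
            rw [if_pos rfl, coeff_one]
            by_cases ha : a = 0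
            · subst ha; norm_num [Nat.factorial]
            · rw [if_neg (show ¬ a + 1 = 1 by omega)]; simp [ha]
          · rw [if_neg hb1, map_zero, if_neg (by omega)]
            simp


lemma LXlem : BX * (EX - 1) = XX := by
  rw [BX, EX, XX, ← map_one (C (R := QX)), ← map_sub, ← map_mul,
    bernoulliPowerSeries_mul_exp_sub_one]

lemma LYlem : BY * (EY - 1) = X := bernoulliPowerSeries_mul_exp_sub_one QX

lemma XX_ne_zero : (XX : QXY) ≠ 0 := by
  intro h
  have h0 := congrArg (coeff (R := QX) 0) h
  rw [XX, coeff_C, if_pos rfl, map_zero] at h0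
  exact PowerSeries.X_ne_zero h0

lemma XXX_ne_zero : XX + X ≠ (0 : QXY) := by
  intro h
  have h0 := congrArg (coeff (R := QX) 0) h
  rw [map_add, XX, coeff_C, if_pos rfl, PowerSeries.coeff_X, if_neg (by omega),
    add_zero, map_zero] at h0
  exact PowerSeries.X_ne_zero h0

lemma hP_ne : EX - 1 ≠ (0 : QXY) := by
  intro h
  exact XX_ne_zero (by rw [← LXlem, h, mul_zero])

lemma hQ_ne : EY - 1 ≠ (0 : QXY) := by
  intro h
  exact PowerSeries.X_ne_zero (R := QX) (by rw [← LYlem, h, mul_zero])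

lemma hR_ne : EX * EY - 1 ≠ (0 : QXY) := by
  intro h
  exact XXX_ne_zero (by rw [← K1, h, mul_zero])

lemma star : (XX + X) * (BX * BY) = Bxy * (X * BX + XX * BY + XX * X) := by
  apply mul_right_cancel₀ (b := ((EX - 1) * (EY - 1)) * (EX * EY - 1))
    (mul_ne_zero (mul_ne_zero hP_ne hQ_ne) hR_ne)
  linear_combination ((XX+X) * (EY-1) * ((EX*EY-1) * BY - X)) * LXlem
    + ((XX+X) * XX * ((EX*EY-1) - (EX-1))) * LYlem
    - ((X*BX + XX*BY + XX*X) * (EX-1) * (EY-1)) * K1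


def bb (n : ℕ) : ℚ := bernoulli n / n !

lemma coeff_BP (i : ℕ) : (coeff (R := ℚ) i) (bernoulliPowerSeries ℚ) = bb i := by
  rw [bernoulliPowerSeries, coeff_mk, bb]
  simp

lemma coeff_BY (j : ℕ) : (coeff (R := QX) j) BY = C (R := ℚ) (bb j) := by
  rw [BY, bernoulliPowerSeries, coeff_mk, bb]
  rfl

lemma coeff_BXBY (i j : ℕ) : (coeff (R := ℚ) i) ((coeff (R := QX) j) (BX * BY)) = bb i * bb j := by
  rw [BX, coeff_C_mul, coeff_BY, coeff_mul_C, coeff_BP]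

lemma coeff_coeff_XX_mul (F : QXY) (a b : ℕ) :
    (coeff (R := ℚ) a) ((coeff (R := QX) b) (XX * F))
      = if a = 0 then 0 else (coeff (R := ℚ) (a-1)) ((coeff (R := QX) b) F) := by
  rw [XX, coeff_C_mul]
  rcases a with _ | a'
  · simp [PowerSeries.coeff_zero_eq_constantCoeff, map_mul]
  · rw [PowerSeries.coeff_succ_X_mul]
    simp

lemma coeff_coeff_X_mul (F : QXY) (a b : ℕ) :
    (coeff (R := ℚ) a) ((coeff (R := QX) b) ((X : QXY) * F))
      = if b = 0 then 0 else (coeff (R := ℚ) a) ((coeff (R := QX) (b-1)) F) := by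
  rcases b with _ | b'
  · simp [PowerSeries.coeff_zero_eq_constantCoeff, map_mul]
  · rw [PowerSeries.coeff_succ_X_mul]
    simp

lemma coeff_G (p q : ℕ) :
    (coeff (R := ℚ) p) ((coeff (R := QX) q) ((X : QXY) * BX + XX * BY + XX * X)) =
      (if q = 1 then bb p else 0) + (if p = 1 then bb q else 0)
        + (if p = 1 ∧ q = 1 then 1 else 0) := by
  rw [map_add, map_add, map_add, map_add, coeff_coeff_X_mul, coeff_coeff_XX_mul,
    coeff_coeff_XX_mul]
  congr 1
  congr 1
  · rcases q with _ | q'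
    · simp
    · rcases q' with _ | q''
      · simp only [BX, coeff_C, if_pos rfl]
        simp [coeff_BP]
      · simp only [BX, coeff_C]
        norm_num
  · rcases p with _ | p'
    · simp
    · rcases p' with _ | p''
      · simp only [coeff_BY, coeff_C, if_pos rfl]
        simp [coeff_BP]
      · simp only [coeff_BY, coeff_C]
        norm_num
  · rcases p with _ | p'
    · simp
    · rcases p' with _ | p''
      · rcases q with _ | q'
        · simp [PowerSeries.coeff_X]
        · rcases q' with _ | q''
          · simp [PowerSeries.coeff_X, PowerSeries.coeff_one]
          · simp [PowerSeries.coeff_X]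
      · rcases q with _ | q'
        · simp [PowerSeries.coeff_X]
        · rcases q' with _ | q''
          · simp [PowerSeries.coeff_X, PowerSeries.coeff_one]
          · simp [PowerSeries.coeff_X]

lemma sumCollapse (c : ℕ) (hc : c ≠ 0) (f : ℕ → ℚ) :
    ∑ j ∈ range (c+1), (if c - j = 1 then f j else 0) = f (c-1) := by
  rw [Finset.sum_eq_single_of_mem (c-1) (by simp only [mem_range]; omega)]
  · rw [if_pos (by omega)]
  · intro j hj hne
    simp only [mem_range] at hj
    rw [if_neg (by omega)]


lemma Cab (a b : ℕ) :
    (if a = 0 then 0 else bb (a-1) * bb b) + (if b = 0 then 0 else bb a * bb (b-1))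
  = (if b = 0 then 0 else ∑ i ∈ range (a+1), β i (b-1) * bb (a-i))
  + (if a = 0 then 0 else ∑ j ∈ range (b+1), β (a-1) j * bb (b-j))
  + (if a = 0 ∨ b = 0 then 0 else β (a-1) (b-1)) := by
  have hL : (coeff (R := ℚ) a) ((coeff (R := QX) b) ((XX + X) * (BX * BY)))
      = (if a = 0 then 0 else bb (a-1) * bb b) + (if b = 0 then 0 else bb a * bb (b-1)) := by
    rw [add_mul, map_add, map_add, coeff_coeff_XX_mul, coeff_coeff_X_mul]
    congr 1
    · by_cases ha : a = 0
      · simp [ha]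
      · rw [if_neg ha, if_neg ha, coeff_BXBY]
    · by_cases hb : b = 0
      · simp [hb]
      · rw [if_neg hb, if_neg hb, coeff_BXBY]
  have hR : (coeff (R := ℚ) a) ((coeff (R := QX) b) (Bxy * ((X:QXY) * BX + XX * BY + XX * X)))
      = (if b = 0 then 0 else ∑ i ∈ range (a+1), β i (b-1) * bb (a-i))
      + (if a = 0 then 0 else ∑ j ∈ range (b+1), β (a-1) j * bb (b-j))
      + (if a = 0 ∨ b = 0 then 0 else β (a-1) (b-1)) := by
    rw [coeff_Bxy_mul]
    calc ∑ j ∈ range (b+1), ∑ i ∈ range (a+1),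
          β i j * (coeff (R := ℚ) (a-i)) ((coeff (R := QX) (b-j)) ((X:QXY) * BX + XX * BY + XX * X))
        = (∑ j ∈ range (b+1), ∑ i ∈ range (a+1), β i j * (if b-j = 1 then bb (a-i) else 0))
          + (∑ j ∈ range (b+1), ∑ i ∈ range (a+1), β i j * (if a-i = 1 then bb (b-j) else 0))
          + (∑ j ∈ range (b+1), ∑ i ∈ range (a+1),
              β i j * (if a-i = 1 ∧ b-j = 1 then 1 else 0)) := by
          rw [← Finset.sum_add_distrib, ← Finset.sum_add_distrib]
          apply Finset.sum_congr rfl; intro j hj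
          rw [← Finset.sum_add_distrib, ← Finset.sum_add_distrib]
          apply Finset.sum_congr rfl; intro i hi
          rw [coeff_G]; ring
      _ = (if b = 0 then 0 else ∑ i ∈ range (a+1), β i (b-1) * bb (a-i))
          + (if a = 0 then 0 else ∑ j ∈ range (b+1), β (a-1) j * bb (b-j))
          + (if a = 0 ∨ b = 0 then 0 else β (a-1) (b-1)) := by
          congr 1
          · congr 1
            · by_cases hb : b = 0
              · subst hb; simp
              · rw [if_neg hb, ← sumCollapse b hb (fun j => ∑ i ∈ range (a+1), β i j * bb (a-i))]
                apply Finset.sum_congr rfl; intro j hj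
                by_cases h : b - j = 1 <;> simp [h]
            · by_cases ha : a = 0
              · subst ha; simp
              · rw [if_neg ha]
                apply Finset.sum_congr rfl; intro j hj
                rw [← sumCollapse a ha (fun i => β i j * bb (b-j))]
                apply Finset.sum_congr rfl; intro i hi
                by_cases h : a - i = 1 <;> simp [h]
          · by_cases ha : a = 0
            · subst ha; simp
            · by_cases hb : b = 0
              · subst hb
                rw [if_pos (Or.inr rfl)]
                apply Finset.sum_eq_zero; intro j hj
                apply Finset.sum_eq_zero; intro i hi
                simp
              · rw [if_neg (by tauto), ← sumCollapse b hb (fun j => β (a-1) j)]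
                apply Finset.sum_congr rfl; intro j hj
                by_cases h : b - j = 1
                · rw [if_pos h, ← sumCollapse a ha (fun i => β i j)]
                  apply Finset.sum_congr rfl; intro i hi
                  by_cases h2 : a - i = 1 <;> simp [h, h2]
                · simp [h]
  rw [← hL, ← hR, star]


lemma beta_comm (i j : ℕ) : β i j = β j i := by
  rw [β, β, Nat.add_comm, mul_comm]

lemma tri_reindex (M : ℕ) (F : ℕ → ℕ → ℚ) :
    ∑ a ∈ range M, ∑ i ∈ range (a+1), F a i
      = ∑ s ∈ range M, ∑ i ∈ range (M-s), F (s+i) i := by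
  rw [Finset.sum_sigma', Finset.sum_sigma']
  apply Finset.sum_nbij' (i := fun p => (⟨p.1 - p.2, p.2⟩ : Σ _ : ℕ, ℕ))
    (j := fun q => (⟨q.1 + q.2, q.2⟩ : Σ _ : ℕ, ℕ))
  · intro p hp
    simp only [Finset.mem_sigma, mem_range] at hp ⊢
    omega
  · intro q hq
    simp only [Finset.mem_sigma, mem_range] at hq ⊢
    omega
  · intro p hp
    simp only [Finset.mem_sigma, mem_range] at hp
    ext <;> simp <;> omega
  · intro q hq
    simp only [Finset.mem_sigma, mem_range] at hq
    ext <;> simp <;> omega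
  · intro p hp
    simp only [Finset.mem_sigma, mem_range] at hp
    have : p.1 - p.2 + p.2 = p.1 := by omega
    rw [this]

lemma gauss1 (M : ℕ) : ∑ a ∈ range (M+1), (a:ℚ) = M*(M+1)/2 := by
  induction M with
  | zero => simp
  | succ M ih =>
    rw [Finset.sum_range_succ, ih]
    push_cast
    ring

lemma gauss2 (M : ℕ) : ∑ a ∈ range (M+1), (a:ℚ)*((M:ℚ)-a) = ((M:ℚ)-1)*M*(M+1)/6 := by
  induction M with
  | zero => simp
  | succ M ih =>
    have step : ∑ a ∈ range (M+2), (a:ℚ)*(((M+1):ℚ)-a)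
        = ∑ a ∈ range (M+1), (a:ℚ)*(((M+1):ℚ)-a) := by
      rw [Finset.sum_range_succ]
      simp
    rw [show ((M+1:ℕ):ℚ) = (M:ℚ)+1 by push_cast; ring] at *
    rw [step]
    have split : ∀ a ∈ range (M+1), (a:ℚ)*(((M:ℚ)+1)-a) = (a:ℚ)*((M:ℚ)-a) + a := by
      intro a ha; ring
    rw [Finset.sum_congr rfl split, Finset.sum_add_distrib, ih, gauss1]
    ring


lemma E1 (M : ℕ) :
    ∑ a ∈ range (M+1), ((a ! : ℚ) * (M-a)!) * (if a = 0 then 0 else bb (a-1) * bb (M-a))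
      = ∑ k ∈ range M, ((k:ℚ)+1) * bernoulli k * bernoulli (M-1-k) := by
  rw [Finset.sum_range_succ', if_pos rfl, mul_zero, add_zero]
  apply Finset.sum_congr rfl
  intro k hk
  simp only [mem_range] at hk
  rw [if_neg (by omega), show (k+1)-1 = k from by omega, show M-(k+1) = M-1-k from by omega,
    bb, bb, factorial_succ]
  have n1 : (k ! : ℚ) ≠ 0 := by exact_mod_cast k.factorial_ne_zero
  have n2 : ((M-1-k)! : ℚ) ≠ 0 := by exact_mod_cast (M-1-k).factorial_ne_zero
  push_cast
  field_simp

lemma E2 (M : ℕ) :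
    ∑ a ∈ range (M+1), ((a ! : ℚ) * (M-a)!) * (if M-a = 0 then 0 else bb a * bb (M-a-1))
      = ∑ k ∈ range M, ((M-k : ℕ):ℚ) * bernoulli k * bernoulli (M-1-k) := by
  rw [Finset.sum_range_succ]
  rw [if_pos (by omega), mul_zero, add_zero]
  apply Finset.sum_congr rfl
  intro k hk
  simp only [mem_range] at hk
  rw [if_neg (by omega), show M-k-1 = M-1-k from by omega, bb, bb,
    show (M-k)! = (M-k) * (M-1-k)! from by rw [show M-k = (M-1-k)+1 from by omega, factorial_succ]]
  have n1 : (k ! : ℚ) ≠ 0 := by exact_mod_cast k.factorial_ne_zero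
  have n2 : ((M-1-k)! : ℚ) ≠ 0 := by exact_mod_cast (M-1-k).factorial_ne_zero
  push_cast
  field_simp

lemma E3 (M : ℕ) :
    ∑ a ∈ range (M+1), ((a ! : ℚ) * (M-a)!)
        * (if M-a = 0 then 0 else ∑ i ∈ range (a+1), β i (M-a-1) * bb (a-i))
      = ∑ s ∈ range M, (((M+1).choose (s+2) : ℚ)) * bernoulli s * bernoulli (M-1-s) := by
  rw [Finset.sum_range_succ, if_pos (by omega), mul_zero, add_zero]
  have step1 : ∀ a ∈ range M,
      ((a ! : ℚ) * (M-a)!) * (if M-a = 0 then 0 else ∑ i ∈ range (a+1), β i (M-a-1) * bb (a-i))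
      = ∑ i ∈ range (a+1), ((a ! : ℚ) * (M-a)!) * (β i (M-a-1) * bb (a-i)) := by
    intro a ha
    simp only [mem_range] at ha
    rw [if_neg (by omega), Finset.mul_sum]
  rw [Finset.sum_congr rfl step1,
    tri_reindex M (fun a i => ((a ! : ℚ) * (M-a)!) * (β i (M-a-1) * bb (a-i)))]
  apply Finset.sum_congr rfl
  intro s hs
  simp only [mem_range] at hs
  obtain ⟨m, rfl⟩ : ∃ m, M = s+m+1 := ⟨M-s-1, by omega⟩
  rw [show s+m+1-s = m+1 from by omega, show s+m+1-1-s = m from by omega]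
  have hterm : ∀ i ∈ range (m+1),
      (((s+i)! : ℚ) * ((s+m+1-(s+i))!)) * (β i (s+m+1-(s+i)-1) * bb (s+i-i))
      = (bernoulli m * bernoulli s / ((m ! : ℚ) * s !))
          * ((m.choose i : ℚ) * (s+i)! * (m+1-i)!) := by
    intro i hi
    simp only [mem_range] at hi
    rw [show s+m+1-(s+i)-1 = m-i from by omega, show s+m+1-(s+i) = m+1-i from by omega,
      show s+i-i = s from by omega, β, show i+(m-i) = m from by omega, bb]
    have hmf : (m ! : ℚ) = (m.choose i) * i ! * (m-i)! := by
      exact_mod_cast (Nat.choose_mul_factorial_mul_factorial (show i ≤ m by omega)).symm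
    rw [hmf]
    have n1 : (i ! : ℚ) ≠ 0 := by exact_mod_cast i.factorial_ne_zero
    have n2 : ((m-i)! : ℚ) ≠ 0 := by exact_mod_cast (m-i).factorial_ne_zero
    have n3 : (s ! : ℚ) ≠ 0 := by exact_mod_cast s.factorial_ne_zero
    have n4 : (m.choose i : ℚ) ≠ 0 := by
      exact_mod_cast (Nat.choose_pos (show i ≤ m by omega)).ne'
    field_simp
  rw [Finset.sum_congr rfl hterm, ← Finset.mul_sum, beta_sum m s]
  have hc : ((s+m+2).choose (s+2) : ℚ) * (s+2)! * m ! = (s+m+2)! := by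
    have h := Nat.choose_mul_factorial_mul_factorial (show s+2 ≤ s+m+2 by omega)
    rw [show s+m+2-(s+2) = m from by omega] at h
    exact_mod_cast h
  rw [show s+m+1+1 = s+m+2 from by omega, ← hc,
    show (s+2)! = (s+2)*((s+1)*s !) from by rw [factorial_succ, factorial_succ]]
  have n1 : (s ! : ℚ) ≠ 0 := by exact_mod_cast s.factorial_ne_zero
  have n2 : (m ! : ℚ) ≠ 0 := by exact_mod_cast m.factorial_ne_zero
  have n3 : ((s:ℚ)+1) ≠ 0 := by positivity
  have n4 : ((s:ℚ)+2) ≠ 0 := by positivity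
  push_cast
  field_simp

lemma E4 (M : ℕ) :
    ∑ a ∈ range (M+1), ((a ! : ℚ) * (M-a)!)
        * (if a = 0 then 0 else ∑ j ∈ range ((M-a)+1), β (a-1) j * bb (M-a-j))
      = ∑ s ∈ range M, (((M+1).choose (s+2) : ℚ)) * bernoulli s * bernoulli (M-1-s) := by
  rw [← E3 M]
  rw [← Finset.sum_range_reflect
    (fun a => ((a ! : ℚ) * (M-a)!)
      * (if M-a = 0 then 0 else ∑ i ∈ range (a+1), β i (M-a-1) * bb (a-i))) (M+1)]
  apply Finset.sum_congr rfl
  intro a ha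
  simp only [mem_range] at ha
  rw [show M+1-1-a = M-a from by omega, show M-(M-a) = a from by omega]
  by_cases h : a = 0
  · subst h
    rw [if_pos rfl, if_pos rfl]
    ring
  · rw [if_neg h, if_neg h]
    have : ∀ j ∈ range ((M-a)+1), β (a-1) j * bb (M-a-j) = β j (a-1) * bb (M-a-j) := by
      intro j hj
      rw [beta_comm]
    rw [Finset.sum_congr rfl this]
    ring

lemma E5 (M : ℕ) :
    ∑ a ∈ range (M+1), ((a ! : ℚ) * (M-a)!)
        * (if a = 0 ∨ M-a = 0 then 0 else β (a-1) (M-a-1))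
      = ((M:ℚ)-1)*M*(M+1)/6 * bernoulli (M-2) := by
  have hterm : ∀ a ∈ range (M+1), ((a ! : ℚ) * (M-a)!)
      * (if a = 0 ∨ M-a = 0 then 0 else β (a-1) (M-a-1))
      = ((a:ℚ)*((M:ℚ)-a)) * bernoulli (M-2) := by
    intro a ha
    simp only [mem_range] at ha
    by_cases h : a = 0 ∨ M-a = 0
    · rw [if_pos h, mul_zero]
      rcases h with h | h
      · subst h; simp
      · have : (M:ℚ) = (a:ℚ) := by exact_mod_cast congrArg (Nat.cast (R:=ℚ)) (by omega : M = a)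
        rw [this]
        ring
    · push_neg at h
      rw [if_neg (by tauto)]
      obtain ⟨a', rfl⟩ : ∃ a', a = a'+1 := ⟨a-1, by omega⟩
      obtain ⟨c, hc⟩ : ∃ c, M - (a'+1) = c+1 := ⟨M-(a'+1)-1, by omega⟩
      have hM : M = a'+c+2 := by omega
      subst hM
      rw [show a'+1-1 = a' from by omega, show a'+c+2-(a'+1)-1 = c from by omega,
        show a'+c+2-(a'+1) = c+1 from by omega, show a'+c+2-2 = a'+c from by omega,
        β, factorial_succ, factorial_succ]
      have n1 : (a' ! : ℚ) ≠ 0 := by exact_mod_cast a'.factorial_ne_zero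
      have n2 : (c ! : ℚ) ≠ 0 := by exact_mod_cast c.factorial_ne_zero
      push_cast
      field_simp
      ring
  rw [Finset.sum_congr rfl hterm, ← Finset.sum_mul, gauss2]

lemma key (M : ℕ) :
    ((M:ℚ)+1) * ∑ k ∈ range M, bernoulli k * bernoulli (M-1-k)
      = 2 * (∑ s ∈ range M, ((M+1).choose (s+2) : ℚ) * bernoulli s * bernoulli (M-1-s))
        + ((M:ℚ)-1)*M*(M+1)/6 * bernoulli (M-2) := by
  have h := Finset.sum_congr rfl
    (fun a (_ : a ∈ range (M+1)) =>
      congrArg (fun x => ((a ! : ℚ)*(M-a)!) * x) (Cab a (M-a)))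
  simp only [mul_add] at h
  rw [Finset.sum_add_distrib, Finset.sum_add_distrib, Finset.sum_add_distrib] at h
  rw [E1 M, E2 M, E3 M, E4 M, E5 M] at h
  have comb : ∑ k ∈ range M, ((k:ℚ)+1)*bernoulli k*bernoulli (M-1-k)
      + ∑ k ∈ range M, ((M-k:ℕ):ℚ)*bernoulli k*bernoulli (M-1-k)
      = ((M:ℚ)+1) * ∑ k ∈ range M, bernoulli k * bernoulli (M-1-k) := by
    rw [← Finset.sum_add_distrib, Finset.mul_sum]
    apply Finset.sum_congr rfl
    intro k hk
    simp only [mem_range] at hk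
    have : ((M-k:ℕ):ℚ) = (M:ℚ)-k := by
      push_cast [Nat.cast_sub (le_of_lt hk)]
      ring
    rw [this]
    ring
  rw [comb] at h
  rw [h]
  ring


lemma even_split (n : ℕ) (f : ℕ → ℚ) (hodd : ∀ k, Odd k → k < 2*n+1 → f k = 0) :
    ∑ k ∈ range (2*n+1), f k = f 0 + ∑ t ∈ Finset.Icc 1 n, f (2*t) := by
  induction n with
  | zero => simp
  | succ n ih =>
    rw [show 2*(n+1)+1 = (2*n+1)+1+1 from by ring, Finset.sum_range_succ, Finset.sum_range_succ,
      ih (fun k hk hlt => hodd k hk (by omega)),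
      hodd (2*n+1) ⟨n, by ring⟩ (by omega),
      Finset.sum_Icc_succ_top (by omega : 1 ≤ n+1),
      show 2*n+1+1 = 2*(n+1) from by ring]
    ring

/-- For every integer `n ≥ 2`,
`∑_{k=1}^{n} B_{2k}B_{2n-2k}
  = (1/(n+1)) ∑_{k=1}^{n} C(2n+2, 2k+2) B_{2k}B_{2n-2k} + 2n B_{2n}`
(the `p = 1` case of the one-parameter generalization of Miki's identity). -/
theorem miki_identity_p_one (n : ℕ) (hn : 2 ≤ n) :
    ∑ k ∈ Finset.Icc 1 n, bernoulli (2 * k) * bernoulli (2 * n - 2 * k)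
    = (1 / (n + 1) : ℚ) * ∑ k ∈ Finset.Icc 1 n,
        ((2 * n + 2).choose (2 * k + 2) : ℚ) * bernoulli (2 * k) * bernoulli (2 * n - 2 * k)
      + 2 * n * bernoulli (2 * n) := by
  have hodd1 : bernoulli (2*n-1) = 0 := by
    rw [bernoulli_eq_bernoulli'_of_ne_one (by omega)]
    exact bernoulli'_eq_zero_of_odd ⟨n-1, by omega⟩ (by omega)
  have hbz : ∀ k, Odd k → k < 2*n+1 → bernoulli k * bernoulli (2*n-k) = 0 := by
    intro k hk hlt
    rcases eq_or_ne k 1 with rfl | hne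
    · rw [hodd1, mul_zero]
    · have hz : bernoulli k = 0 := by
        rw [bernoulli_eq_bernoulli'_of_ne_one hne]
        refine bernoulli'_eq_zero_of_odd hk ?_
        rcases hk with ⟨m, hm⟩
        omega
      rw [hz, zero_mul]
  have hM := key (2*n+1)
  have hidx : ∀ k : ℕ, 2*n+1-1-k = 2*n-k := fun k => by omega
  simp only [hidx, show 2*n+1+1 = 2*n+2 from by omega,
    show 2*n+1-2 = 2*n-1 from by omega] at hM
  rw [hodd1, mul_zero, add_zero] at hM
  have hU := even_split n (fun k => bernoulli k * bernoulli (2*n-k)) (fun k hk hlt => hbz k hk hlt)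
  have hT := even_split n (fun k => ((2*n+2).choose (k+2) : ℚ) * bernoulli k * bernoulli (2*n-k))
    (fun k hk hlt => by
      show ((2*n+2).choose (k+2) : ℚ) * bernoulli k * bernoulli (2*n-k) = 0
      rw [mul_assoc, hbz k hk hlt, mul_zero])
  rw [hU, hT] at hM
  rw [bernoulli_zero, one_mul, Nat.sub_zero] at hM
  rw [show (0:ℕ)+2 = 2 from rfl, Nat.cast_choose_two] at hM
  have hn1 : ((n:ℚ)+1) ≠ 0 := by positivity
  push_cast at hM
  have hkey : ((n:ℚ)+1) * (∑ k ∈ Finset.Icc 1 n, bernoulli (2 * k) * bernoulli (2 * n - 2 * k))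
      = (∑ k ∈ Finset.Icc 1 n, ((2 * n + 2).choose (2 * k + 2) : ℚ) * bernoulli (2 * k)
          * bernoulli (2 * n - 2 * k))
        + 2*(n:ℚ)*((n:ℚ)+1)*bernoulli (2*n) := by
    linear_combination hM/2
  have expand : (1 / ((n:ℚ) + 1)) * (∑ k ∈ Finset.Icc 1 n,
        ((2 * n + 2).choose (2 * k + 2) : ℚ) * bernoulli (2 * k) * bernoulli (2 * n - 2 * k))
      + 2 * (n:ℚ) * bernoulli (2 * n)
      = ((∑ k ∈ Finset.Icc 1 n, ((2 * n + 2).choose (2 * k + 2) : ℚ) * bernoulli (2 * k)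
          * bernoulli (2 * n - 2 * k))
        + 2*(n:ℚ)*((n:ℚ)+1)*bernoulli (2*n)) / ((n:ℚ)+1) := by
    field_simp
  rw [expand, eq_div_iff hn1]
  linear_combination hkey

end
end
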